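/- In the free Lie algebra on x₁,...,xₙ over ℚ, the Sₙ-invariant subspace of the component spanned by Lie monomials with exactly two brackets is one-dimensional, spanned by Σ_{i≠j} [x_i,[x_i,x_j]]. -/

import Mathlib

open Equiv Finset FreeLieAlgebra

namespace Inv2Aux

lemma lieHom_map_sum {R : Type*} [CommRing R] {L L' : Type*} [LieRing L] [LieAlgebra R L]
    [LieRing L'] [LieAlgebra R L'] (f : L →ₗ⁅R⁆ L') {ι : Type*} (t : Finset ι) (g : ι → L) :
    f (∑ i ∈ t, g i) = ∑ i ∈ t, f (g i) := by
  rw [← LieHom.coe_toLinearMap]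
  exact map_sum f.toLinearMap g t

lemma exists_perm_map {α : Type*} [DecidableEq α] {a b a' b' : α}
    (hab : a ≠ b) (h' : a' ≠ b') : ∃ τ : Equiv.Perm α, τ a = a' ∧ τ b = b' := by
  refine ⟨(Equiv.swap ((Equiv.swap a a') b) b') * (Equiv.swap a a'), ?_, ?_⟩
  · have h1 : (Equiv.swap a a') a = a' := Equiv.swap_apply_left a a'
    simp only [Equiv.Perm.mul_apply, h1]
    apply Equiv.swap_apply_of_ne_of_ne
    · intro h; exact hab ((Equiv.swap a a').injective (h1.trans h))
    · exact h'
  · simp [Equiv.Perm.mul_apply]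

variable {n : ℕ}

/-- the invariant element -/
noncomputable def S (n : ℕ) : FreeLieAlgebra ℚ (Fin n) :=
  ∑ p ∈ Finset.univ.filter (fun p : Fin n × Fin n => p.1 ≠ p.2),
      ⁅FreeLieAlgebra.of ℚ p.1, ⁅FreeLieAlgebra.of ℚ p.1, FreeLieAlgebra.of ℚ p.2⁆⁆

lemma fiber_card_eq (i k : Fin n) (hik : i ≠ k) {p : Fin n × Fin n} (hp : p.1 ≠ p.2) :
    (Finset.univ.filter (fun σ : Equiv.Perm (Fin n) => (σ i, σ k) = p)).card =
    (Finset.univ.filter (fun σ : Equiv.Perm (Fin n) => (σ i, σ k) = (i, k))).card := by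
  obtain ⟨τ, hτ1, hτ2⟩ := exists_perm_map hik hp
  refine Finset.card_bij' (fun σ _ => τ⁻¹ * σ) (fun σ _ => τ * σ) ?_ ?_ ?_ ?_
  · intro σ hσ
    simp only [Finset.mem_filter, Finset.mem_univ, true_and] at hσ ⊢
    have h1 : σ i = p.1 := congrArg Prod.fst hσ
    have h2 : σ k = p.2 := congrArg Prod.snd hσ
    refine Prod.ext ?_ ?_
    · show (τ⁻¹ * σ) i = i
      rw [Equiv.Perm.mul_apply, h1, ← hτ1]
      exact Equiv.symm_apply_apply τ i
    · show (τ⁻¹ * σ) k = k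
      rw [Equiv.Perm.mul_apply, h2, ← hτ2]
      exact Equiv.symm_apply_apply τ k
  · intro σ hσ
    simp only [Finset.mem_filter, Finset.mem_univ, true_and] at hσ ⊢
    have h1 : σ i = i := congrArg Prod.fst hσ
    have h2 : σ k = k := congrArg Prod.snd hσ
    refine Prod.ext ?_ ?_
    · show (τ * σ) i = p.1
      rw [Equiv.Perm.mul_apply, h1, hτ1]
    · show (τ * σ) k = p.2
      rw [Equiv.Perm.mul_apply, h2, hτ2]
  · intro σ _; simp [← mul_assoc]
  · intro σ _; simp [← mul_assoc]

lemma key_sum (i k : Fin n) (hik : i ≠ k) :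
    ∑ σ : Equiv.Perm (Fin n), ⁅FreeLieAlgebra.of ℚ (σ i),
        ⁅FreeLieAlgebra.of ℚ (σ i), FreeLieAlgebra.of ℚ (σ k)⁆⁆ =
    (Finset.univ.filter (fun σ : Equiv.Perm (Fin n) => (σ i, σ k) = (i, k))).card • S n := by
  classical
  set F : Fin n × Fin n → FreeLieAlgebra ℚ (Fin n) :=
    fun p => ⁅FreeLieAlgebra.of ℚ p.1, ⁅FreeLieAlgebra.of ℚ p.1, FreeLieAlgebra.of ℚ p.2⁆⁆ with hF
  have hmaps : ∀ σ ∈ (Finset.univ : Finset (Equiv.Perm (Fin n))),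
      (σ i, σ k) ∈ Finset.univ.filter (fun p : Fin n × Fin n => p.1 ≠ p.2) := by
    intro σ _
    simp only [Finset.mem_filter, Finset.mem_univ, true_and]
    exact fun h => hik (σ.injective h)
  have h0 := Finset.sum_fiberwise_of_maps_to (t := Finset.univ.filter
      (fun p : Fin n × Fin n => p.1 ≠ p.2)) hmaps (fun σ => F (σ i, σ k))
  rw [← h0]
  have h1 : ∀ p ∈ Finset.univ.filter (fun p : Fin n × Fin n => p.1 ≠ p.2),
      ∑ σ ∈ Finset.univ.filter (fun σ : Equiv.Perm (Fin n) => (σ i, σ k) = p), F (σ i, σ k) =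
      (Finset.univ.filter (fun σ : Equiv.Perm (Fin n) => (σ i, σ k) = (i, k))).card • F p := by
    intro p hp
    simp only [Finset.mem_filter, Finset.mem_univ, true_and] at hp
    rw [Finset.sum_congr rfl (fun σ hσ => by
      simp only [Finset.mem_filter, Finset.mem_univ, true_and] at hσ
      rw [hσ]), Finset.sum_const, fiber_card_eq i k hik hp]
  rw [Finset.sum_congr rfl h1, ← Finset.smul_sum]
  rfl

lemma sum_perm_mem_span (i j k : Fin n) :
    (∑ σ : Equiv.Perm (Fin n), ⁅FreeLieAlgebra.of ℚ (σ i),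
        ⁅FreeLieAlgebra.of ℚ (σ j), FreeLieAlgebra.of ℚ (σ k)⁆⁆)
      ∈ Submodule.span ℚ {S n} := by
  classical
  by_cases hjk : j = k
  · subst hjk
    have hz : ∀ σ : Equiv.Perm (Fin n), ⁅FreeLieAlgebra.of ℚ (σ i),
        ⁅FreeLieAlgebra.of ℚ (σ j), FreeLieAlgebra.of ℚ (σ j)⁆⁆ = 0 := by
      intro σ; rw [lie_self, lie_zero]
    rw [Finset.sum_congr rfl (fun σ _ => hz σ), Finset.sum_const, smul_zero]
    exact Submodule.zero_mem _
  by_cases hij : i = j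
  · subst hij
    rw [key_sum i k hjk, ← Nat.cast_smul_eq_nsmul ℚ]
    exact Submodule.smul_mem _ _ (Submodule.mem_span_singleton_self _)
  by_cases hik : i = k
  · subst hik
    have hz : ∀ σ : Equiv.Perm (Fin n), ⁅FreeLieAlgebra.of ℚ (σ i),
        ⁅FreeLieAlgebra.of ℚ (σ j), FreeLieAlgebra.of ℚ (σ i)⁆⁆ =
        -⁅FreeLieAlgebra.of ℚ (σ i),
          ⁅FreeLieAlgebra.of ℚ (σ i), FreeLieAlgebra.of ℚ (σ j)⁆⁆ := by
      intro σ
      have h := lie_skew (FreeLieAlgebra.of ℚ (σ i)) (FreeLieAlgebra.of ℚ (σ j))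
      rw [← h, lie_neg, neg_neg]
    rw [Finset.sum_congr rfl (fun σ _ => hz σ), Finset.sum_neg_distrib]
    refine Submodule.neg_mem _ ?_
    rw [key_sum i j hij, ← Nat.cast_smul_eq_nsmul ℚ]
    exact Submodule.smul_mem _ _ (Submodule.mem_span_singleton_self _)
  · -- i, j, k all distinct : sum is zero by the involution σ ↦ σ * swap j k
    set G : Equiv.Perm (Fin n) → FreeLieAlgebra ℚ (Fin n) :=
      fun σ => ⁅FreeLieAlgebra.of ℚ (σ i),
        ⁅FreeLieAlgebra.of ℚ (σ j), FreeLieAlgebra.of ℚ (σ k)⁆⁆ with hG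
    have h1 : ∑ σ : Equiv.Perm (Fin n), G (σ * Equiv.swap j k) = ∑ σ : Equiv.Perm (Fin n), G σ :=
      Equiv.sum_comp (Equiv.mulRight (Equiv.swap j k)) G
    have h2 : ∀ σ : Equiv.Perm (Fin n), G (σ * Equiv.swap j k) = -G σ := by
      intro σ
      have hi : (σ * Equiv.swap j k) i = σ i := by
        simp [Equiv.Perm.mul_apply, Equiv.swap_apply_of_ne_of_ne hij hik]
      have hj : (σ * Equiv.swap j k) j = σ k := by
        simp [Equiv.Perm.mul_apply]
      have hk : (σ * Equiv.swap j k) k = σ j := by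
        simp [Equiv.Perm.mul_apply]
      rw [hG]
      simp only [hi, hj, hk]
      have h := lie_skew (FreeLieAlgebra.of ℚ (σ j)) (FreeLieAlgebra.of ℚ (σ k))
      rw [← h, lie_neg, neg_neg]
    have h3 : ∑ σ : Equiv.Perm (Fin n), G σ = -∑ σ : Equiv.Perm (Fin n), G σ := by
      conv_lhs => rw [← h1]
      rw [Finset.sum_congr rfl (fun σ _ => h2 σ), Finset.sum_neg_distrib]
    have h4 : (2 : ℚ) • ∑ σ : Equiv.Perm (Fin n), G σ = 0 := by
      rw [two_smul]
      nth_rewrite 1 [h3]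
      rw [neg_add_cancel]
    have h5 : ∑ σ : Equiv.Perm (Fin n), G σ = 0 := by
      rcases smul_eq_zero.mp h4 with h | h
      · norm_num at h
      · exact h
    rw [h5]; exact Submodule.zero_mem _

end Inv2Aux

attribute [local instance 100] LieRing.ofAssociativeRing

open Inv2Aux in
theorem invariant_two_bracket_dim_one (n : ℕ) (hn : 2 ≤ n)
    (V2 : Submodule ℚ (FreeLieAlgebra ℚ (Fin n)))
    (hV2 : V2 = Submodule.span ℚ
      {v | ∃ i j k : Fin n,
        v = ⁅FreeLieAlgebra.of ℚ i, ⁅FreeLieAlgebra.of ℚ j, FreeLieAlgebra.of ℚ k⁆⁆})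
    (s : FreeLieAlgebra ℚ (Fin n))
    (hs : s = ∑ p ∈ Finset.univ.filter (fun p : Fin n × Fin n => p.1 ≠ p.2),
      ⁅FreeLieAlgebra.of ℚ p.1, ⁅FreeLieAlgebra.of ℚ p.1, FreeLieAlgebra.of ℚ p.2⁆⁆) :
    s ∈ V2 ∧
    (∀ σ : Equiv.Perm (Fin n),
      (FreeLieAlgebra.lift ℚ (fun t => FreeLieAlgebra.of ℚ (σ t))) s = s) ∧
    s ≠ 0 ∧
    (∀ v ∈ V2,
      (∀ σ : Equiv.Perm (Fin n),
        (FreeLieAlgebra.lift ℚ (fun t => FreeLieAlgebra.of ℚ (σ t))) v = v) →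
      ∃ q : ℚ, v = q • s) := by
  classical
  have hsS : s = S n := hs
  refine ⟨?_, ?_, ?_, ?_⟩
  · -- s ∈ V2
    rw [hs, hV2]
    refine Submodule.sum_mem _ (fun p _ => Submodule.subset_span ⟨p.1, p.1, p.2, rfl⟩)
  · -- invariance
    intro σ
    rw [hs, lieHom_map_sum]
    have hterm : ∀ p : Fin n × Fin n,
        (FreeLieAlgebra.lift ℚ (fun t => FreeLieAlgebra.of ℚ (σ t)))
          ⁅FreeLieAlgebra.of ℚ p.1, ⁅FreeLieAlgebra.of ℚ p.1, FreeLieAlgebra.of ℚ p.2⁆⁆ =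
        ⁅FreeLieAlgebra.of ℚ (σ p.1),
          ⁅FreeLieAlgebra.of ℚ (σ p.1), FreeLieAlgebra.of ℚ (σ p.2)⁆⁆ := by
      intro p
      simp only [LieHom.map_lie, FreeLieAlgebra.lift_of_apply]
    rw [Finset.sum_congr rfl (fun p _ => hterm p)]
    refine Finset.sum_equiv (Equiv.prodCongr σ σ) ?_ ?_
    · intro p
      simp only [Finset.mem_filter, Finset.mem_univ, true_and, Equiv.prodCongr_apply,
        Prod.map_fst, Prod.map_snd]
      exact (σ.injective.ne_iff).symm
    · intro p _; rfl
  · -- s ≠ 0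
    intro hzero
    set i0 : Fin n := ⟨0, by omega⟩ with hi0
    set i1 : Fin n := ⟨1, by omega⟩ with hi1
    have hi01 : i0 ≠ i1 := by
      intro h
      have h01 : (0 : ℕ) = 1 := congrArg Fin.val h
      norm_num at h01
    set em : Matrix (Fin 2) (Fin 2) ℚ := !![0,1;0,0] with hem
    set fm : Matrix (Fin 2) (Fin 2) ℚ := !![0,0;1,0] with hfm
    set g : Fin n → Matrix (Fin 2) (Fin 2) ℚ :=
      fun t => if t = i0 then em else if t = i1 then fm else 0 with hg
    have hA : (FreeLieAlgebra.lift ℚ g) s = 0 := by rw [hzero, map_zero]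
    rw [hs, lieHom_map_sum] at hA
    have hterm : ∀ p : Fin n × Fin n,
        (FreeLieAlgebra.lift ℚ g)
          ⁅FreeLieAlgebra.of ℚ p.1, ⁅FreeLieAlgebra.of ℚ p.1, FreeLieAlgebra.of ℚ p.2⁆⁆ =
        ⁅g p.1, ⁅g p.1, g p.2⁆⁆ := by
      intro p
      simp only [LieHom.map_lie, FreeLieAlgebra.lift_of_apply]
    rw [Finset.sum_congr rfl (fun p _ => hterm p)] at hA
    have hsub : ({(i0, i1), (i1, i0)} : Finset (Fin n × Fin n)) ⊆
        Finset.univ.filter (fun p : Fin n × Fin n => p.1 ≠ p.2) := by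
      intro p hp
      simp only [Finset.mem_insert, Finset.mem_singleton] at hp
      simp only [Finset.mem_filter, Finset.mem_univ, true_and]
      rcases hp with h | h <;> subst h
      · exact hi01
      · exact hi01.symm
    have hvanish : ∀ p ∈ Finset.univ.filter (fun p : Fin n × Fin n => p.1 ≠ p.2),
        p ∉ ({(i0, i1), (i1, i0)} : Finset (Fin n × Fin n)) → ⁅g p.1, ⁅g p.1, g p.2⁆⁆ = 0 := by
      intro p hp hnp
      simp only [Finset.mem_filter, Finset.mem_univ, true_and] at hp
      simp only [Finset.mem_insert, Finset.mem_singleton, not_or] at hnp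
      by_cases h1 : p.1 = i0
      · have h2 : p.2 ≠ i0 := fun h => hp (h1.trans h.symm)
        have h3 : p.2 ≠ i1 := fun h => hnp.1 (Prod.ext h1 h)
        have hz : g p.2 = 0 := by rw [hg]; simp [h2, h3]
        rw [hz, lie_zero, lie_zero]
      by_cases h4 : p.1 = i1
      · have h2 : p.2 ≠ i1 := fun h => hp (h4.trans h.symm)
        have h3 : p.2 ≠ i0 := fun h => hnp.2 (Prod.ext h4 h)
        have hz : g p.2 = 0 := by rw [hg]; simp [h2, h3]
        rw [hz, lie_zero, lie_zero]
      · have hz : g p.1 = 0 := by rw [hg]; simp [h1, h4]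
        rw [hz, zero_lie]
    rw [← Finset.sum_subset hsub hvanish] at hA
    have hne : ((i0, i1) : Fin n × Fin n) ≠ (i1, i0) := by
      intro h
      exact hi01 (congrArg Prod.fst h)
    rw [Finset.sum_pair hne] at hA
    have hgi0 : g i0 = em := by rw [hg]; simp
    have hgi1 : g i1 = fm := by rw [hg]; simp [hi01.symm]
    rw [hgi0, hgi1] at hA
    have hent := congrFun (congrFun hA 0) 1
    simp [Ring.lie_def, Matrix.mul_apply, Fin.sum_univ_two, hem, hfm] at hent
    norm_num at hent
  · -- every invariant element of V2 is a multiple of s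
    intro v hv hinv
    have hcard : (0 : ℚ) < (Fintype.card (Equiv.Perm (Fin n)) : ℚ) := by
      exact_mod_cast Fintype.card_pos
    have h1 : (Fintype.card (Equiv.Perm (Fin n)) : ℚ) • v =
        ∑ σ : Equiv.Perm (Fin n),
          (FreeLieAlgebra.lift ℚ (fun t => FreeLieAlgebra.of ℚ (σ t))) v := by
      rw [Finset.sum_congr rfl (fun σ _ => hinv σ), Finset.sum_const, Finset.card_univ,
        Nat.cast_smul_eq_nsmul ℚ]
    have h2 : (∑ σ : Equiv.Perm (Fin n),
        (FreeLieAlgebra.lift ℚ (fun t => FreeLieAlgebra.of ℚ (σ t))) v) ∈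
        Submodule.span ℚ {s} := by
      rw [hV2] at hv
      refine Submodule.span_induction ?_ ?_ ?_ ?_ hv
      · rintro x ⟨i, j, k, rfl⟩
        have hterm : ∀ σ : Equiv.Perm (Fin n),
            (FreeLieAlgebra.lift ℚ (fun t => FreeLieAlgebra.of ℚ (σ t)))
              ⁅FreeLieAlgebra.of ℚ i, ⁅FreeLieAlgebra.of ℚ j, FreeLieAlgebra.of ℚ k⁆⁆ =
            ⁅FreeLieAlgebra.of ℚ (σ i),
              ⁅FreeLieAlgebra.of ℚ (σ j), FreeLieAlgebra.of ℚ (σ k)⁆⁆ := by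
          intro σ
          simp only [LieHom.map_lie, FreeLieAlgebra.lift_of_apply]
        rw [Finset.sum_congr rfl (fun σ _ => hterm σ), hsS]
        exact sum_perm_mem_span i j k
      · rw [Finset.sum_congr rfl (fun (σ : Equiv.Perm (Fin n)) _ => map_zero (FreeLieAlgebra.lift ℚ (fun t => FreeLieAlgebra.of ℚ (σ t)))), Finset.sum_const, smul_zero]
        exact Submodule.zero_mem _
      · intro x y _ _ hx hy
        rw [Finset.sum_congr rfl (fun σ _ =>
          map_add (FreeLieAlgebra.lift ℚ (fun t => FreeLieAlgebra.of ℚ (σ t))) x y),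
          Finset.sum_add_distrib]
        exact Submodule.add_mem _ hx hy
      · intro a x _ hx
        rw [Finset.sum_congr rfl (fun σ _ =>
          map_smul (FreeLieAlgebra.lift ℚ (fun t => FreeLieAlgebra.of ℚ (σ t))) a x),
          ← Finset.smul_sum]
        exact Submodule.smul_mem _ _ hx
    rw [← h1] at h2
    have h3 : v ∈ Submodule.span ℚ {s} := by
      have h4 := Submodule.smul_mem (Submodule.span ℚ {s})
        ((Fintype.card (Equiv.Perm (Fin n)) : ℚ)⁻¹) h2
      rwa [inv_smul_smul₀ (ne_of_gt hcard)] at h4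
    obtain ⟨q, hq⟩ := Submodule.mem_span_singleton.mp h3
    exact ⟨q, hq.symm⟩
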